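/- arXiv:2107.06951 — 3 statements merged into one kernel-verified Lean document; each statement's English description precedes it below -/
import Mathlib

section
/- For any string w, integer l ≥ 0, and alphabet character α: ℓ(w, α^l) = max(|w|, l) − min(N_α(w), l), where α^l is the string of l copies of α and N_α(w) is the number of occurrences of α in w. -/
/-- Cost structure for Levenshtein distance (formerly in Mathlib `Mathlib/Data/List/EditDistance/Defs.lean`). -/
structure Levenshtein.Cost (α β δ : Type*) where
  delete : α → δ
  insert : β → δ
  substitute : α → β → δ

/-- The default cost structure: every operation costs 1, substituting equal letters costs 0. -/
def Levenshtein.defaultCost {α : Type*} [DecidableEq α] : Levenshtein.Cost α α ℕ where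
  delete _ := 1
  insert _ := 1
  substitute a b := if a = b then 0 else 1

/-- Inner loop of the Levenshtein dynamic program (old Mathlib `Levenshtein.impl`). -/
def Levenshtein.impl {α β δ : Type*} [AddZeroClass δ] [Min δ] (C : Levenshtein.Cost α β δ)
    (xs : List α) (y : β) (d : {r : List δ // 0 < r.length}) : {r : List δ // 0 < r.length} :=
  let ⟨ds, w⟩ := d
  xs.zip (ds.zip ds.tail) |>.foldr
    (init := ⟨[C.insert y + ds.getLast (List.ne_nil_of_length_pos w)], by simp⟩)
    (fun ⟨x, d₀, d₁⟩ ⟨r, w⟩ =>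
      ⟨min (C.delete x + r[0]) (min (C.insert y + d₀) (C.substitute x y + d₁)) :: r, by simp⟩)

/-- Suffix Levenshtein distances (old Mathlib `suffixLevenshtein`). -/
def suffixLevenshtein {α β δ : Type*} [AddZeroClass δ] [Min δ] (C : Levenshtein.Cost α β δ)
    (xs : List α) (ys : List β) : {r : List δ // 0 < r.length} :=
  ys.foldr
    (Levenshtein.impl C xs)
    (xs.foldr (init := ⟨[0], by simp⟩) (fun a ⟨r, w⟩ => ⟨(C.delete a + r[0]) :: r, by simp⟩))

/-- Levenshtein distance with cost structure `C` (old Mathlib `levenshtein`). -/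
def levenshtein {α β δ : Type*} [AddZeroClass δ] [Min δ] (C : Levenshtein.Cost α β δ)
    (xs : List α) (ys : List β) : δ :=
  let ⟨r, _⟩ := suffixLevenshtein C xs ys
  r[0]

theorem lev_impl_cons_val {α β δ : Type*} [AddZeroClass δ] [Min δ] (C : Levenshtein.Cost α β δ)
    (x : α) (xs : List α) (y : β) (d : δ) (ds : List δ) (w : 0 < (d :: ds).length)
    (w' : 0 < ds.length) :
    (Levenshtein.impl C (x :: xs) y ⟨d :: ds, w⟩).1 =
      min (C.delete x + (Levenshtein.impl C xs y ⟨ds, w'⟩).1[0]'(Levenshtein.impl C xs y ⟨ds, w'⟩).2)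
        (min (C.insert y + d) (C.substitute x y + ds[0])) :: (Levenshtein.impl C xs y ⟨ds, w'⟩).1 := by
  match ds, w' with
  | _ :: _, _ => rfl

theorem lev_impl_length {α β δ : Type*} [AddZeroClass δ] [Min δ] (C : Levenshtein.Cost α β δ)
    (xs : List α) (y : β) (d : {r : List δ // 0 < r.length}) (w : d.1.length = xs.length + 1) :
    (Levenshtein.impl C xs y d).1.length = xs.length + 1 := by
  induction xs generalizing d with
  | nil => rfl
  | cons x xs ih =>
    match d, w with
    | ⟨d₁ :: d₂ :: ds, _⟩, w =>
      rw [lev_impl_cons_val C x xs y d₁ (d₂ :: ds) (by simp) (by simp)]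
      simp only [List.length_cons]
      congr 1
      exact ih ⟨d₂ :: ds, (by simp)⟩ (by simpa using w)

theorem lev_suffix_length {α β δ : Type*} [AddZeroClass δ] [Min δ] (C : Levenshtein.Cost α β δ)
    (xs : List α) (ys : List β) :
    (suffixLevenshtein C xs ys).1.length = xs.length + 1 := by
  induction ys with
  | nil =>
    induction xs with
    | nil => rfl
    | cons _ xs ih =>
      simp only [suffixLevenshtein, List.foldr_nil] at ih ⊢
      simp [List.foldr_cons, ih]
  | cons y ys ih =>
    exact lev_impl_length C xs y _ ih

theorem lev_eq_get {α β δ : Type*} [AddZeroClass δ] [Min δ] (C : Levenshtein.Cost α β δ)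
    (xs : List α) (ys : List β) :
    levenshtein C xs ys = (suffixLevenshtein C xs ys).1[0]'(suffixLevenshtein C xs ys).2 := rfl

theorem lev_list_aux {δ : Type*} (l : List δ) (h : δ) (B : List δ) (hl : 0 < l.length)
    (e : l = h :: B) : l = l[0] :: B := by
  subst e; rfl

@[simp] theorem levenshtein_nil_nil {α β δ : Type*} [AddZeroClass δ] [Min δ]
    (C : Levenshtein.Cost α β δ) : levenshtein C ([] : List α) ([] : List β) = 0 := rfl

theorem lev_suffix_cons₁ {α β δ : Type*} [AddZeroClass δ] [Min δ] (C : Levenshtein.Cost α β δ)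
    (x : α) (xs : List α) (ys : List β) :
    (suffixLevenshtein C (x :: xs) ys).1 =
      levenshtein C (x :: xs) ys :: (suffixLevenshtein C xs ys).1 := by
  induction ys with
  | nil => rfl
  | cons y ys ih =>
    have hS : suffixLevenshtein C (x :: xs) ys =
        ⟨levenshtein C (x :: xs) ys :: (suffixLevenshtein C xs ys).1, by simp⟩ := Subtype.ext ih
    have h2 : (suffixLevenshtein C (x :: xs) (y :: ys)).1 =
        (Levenshtein.impl C (x :: xs) y (suffixLevenshtein C (x :: xs) ys)).1 := rfl
    rw [lev_eq_get C (x :: xs) (y :: ys)]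
    simp only [h2, hS]
    exact lev_list_aux _ _ _ _
      (lev_impl_cons_val C x xs y _ _ (by simp) (suffixLevenshtein C xs ys).2)

theorem levenshtein_cons_cons {α β δ : Type*} [AddZeroClass δ] [Min δ] (C : Levenshtein.Cost α β δ)
    (x : α) (xs : List α) (y : β) (ys : List β) :
    levenshtein C (x :: xs) (y :: ys) =
      min (C.delete x + levenshtein C xs (y :: ys))
        (min (C.insert y + levenshtein C (x :: xs) ys)
          (C.substitute x y + levenshtein C xs ys)) := by
  have hS : suffixLevenshtein C (x :: xs) ys =
      ⟨levenshtein C (x :: xs) ys :: (suffixLevenshtein C xs ys).1, by simp⟩ :=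
    Subtype.ext (lev_suffix_cons₁ C x xs ys)
  have h2 : levenshtein C (x :: xs) (y :: ys) =
      (Levenshtein.impl C (x :: xs) y (suffixLevenshtein C (x :: xs) ys)).1[0]'
        (Levenshtein.impl C (x :: xs) y (suffixLevenshtein C (x :: xs) ys)).2 := rfl
  rw [h2]
  simp only [hS]
  simp only [lev_impl_cons_val C x xs y _ _ _ (suffixLevenshtein C xs ys).2]
  rfl

theorem levenshtein_cons_nil {α β δ : Type*} [AddZeroClass δ] [Min δ] (C : Levenshtein.Cost α β δ)
    (x : α) (xs : List α) :
    levenshtein C (x :: xs) ([] : List β) = C.delete x + levenshtein C xs [] := rfl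

theorem levenshtein_nil_cons {α β δ : Type*} [AddZeroClass δ] [Min δ] (C : Levenshtein.Cost α β δ)
    (y : β) (ys : List β) :
    levenshtein C ([] : List α) (y :: ys) = C.insert y + levenshtein C [] ys := by
  have hl := lev_suffix_length C ([] : List α) ys
  have h2 : levenshtein C ([] : List α) (y :: ys) =
      C.insert y + (suffixLevenshtein C ([] : List α) ys).1.getLast
        (List.ne_nil_of_length_pos (suffixLevenshtein C ([] : List α) ys).2) := rfl
  rw [h2, lev_eq_get C ([] : List α) ys]
  congr 1
  generalize (suffixLevenshtein C ([] : List α) ys) = S at hl ⊢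
  match S, hl with
  | ⟨[_], _⟩, _ => rfl

lemma lev_nil_rep {A : Type*} [DecidableEq A] (l : ℕ) (a : A) :
    levenshtein Levenshtein.defaultCost ([] : List A) (List.replicate l a) = l := by
  induction l with
  | zero => simp
  | succ n ih =>
    rw [List.replicate_succ, levenshtein_nil_cons, ih]
    simp [Levenshtein.defaultCost]
    omega

lemma lev_rep_nil {A : Type*} [DecidableEq A] (w : List A) :
    levenshtein Levenshtein.defaultCost w ([] : List A) = w.length := by
  induction w with
  | nil => simp
  | cons x xs ih =>
    rw [levenshtein_cons_nil, ih]
    simp [Levenshtein.defaultCost]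
    omega

/-- the edit distance from `w` to the one-run string `α^l` equals
`max(|w|, l) − min(N_α(w), l)`. -/
theorem lev_to_one_run {A : Type*} [DecidableEq A] (w : List A) (l : ℕ) (a : A) :
    levenshtein Levenshtein.defaultCost w (List.replicate l a) =
      max w.length l - min (w.count a) l := by
  induction w generalizing l with
  | nil => simp [lev_nil_rep]
  | cons x xs ih =>
    induction l with
    | zero => simp [lev_rep_nil]
    | succ n ihl =>
      rw [List.replicate_succ, levenshtein_cons_cons, ← List.replicate_succ,
        ih (n+1), ihl, ih n]
      have hc : xs.count a ≤ xs.length := List.count_le_length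
      by_cases h : x = a
      · subst h
        simp [Levenshtein.defaultCost, List.count_cons]
        omega
      · simp [Levenshtein.defaultCost, List.count_cons, h, Ne.symm h]
        omega
end

section
/- Fix k ≥ 2 and an alphabet of size a ≥ 2. For any two distinct strings u, v of length k there exist a character α (even, with α ≠ a−1 if a is odd) or α odd, and an index 1 ≤ j ≤ k with u_j ≠ v_j, such that the pair of two-run strings {α^{j−1}(α+1)^{k−j+1}, α^{j}(α+1)^{k−j}} (for α even equal to u_j), or {(α−1)^{j−1}α^{k−j+1}, (α−1)^{j}α^{k−j}} (for α odd equal to u_j), distinguishes u and v in Hamming distance: the Hamming distances from u and v to at least one string of the pair differ. -/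
/-- Hamming distance between two lists (number of mismatched positions). -/
def hammingDistL {α : Type*} [DecidableEq α] (u v : List α) : ℕ :=
  (u.zip v).countP (fun p => p.1 ≠ p.2)


private lemma two_run_key (j m : ℕ) (u v u1 u2 v1 v2 : List ℕ) (c d δ ε : ℕ)
    (hud : u = u1 ++ c :: u2) (hvd : v = v1 ++ d :: v2)
    (h1 : u1.length = j) (h2 : v1.length = j)
    (hc : c = δ ∨ c = ε) (hcd : d ≠ c) (hde : δ ≠ ε) :
    (hammingDistL u (List.replicate j δ ++ ε :: List.replicate m ε) ≠
     hammingDistL v (List.replicate j δ ++ ε :: List.replicate m ε)) ∨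
    (hammingDistL u (List.replicate j δ ++ δ :: List.replicate m ε) ≠
     hammingDistL v (List.replicate j δ ++ δ :: List.replicate m ε)) := by
  by_contra hcon
  push_neg at hcon
  obtain ⟨e1, e2⟩ := hcon
  subst hud hvd
  unfold hammingDistL at e1 e2
  rw [List.zip_append (by simp [h1]), List.zip_append (by simp [h2]),
    List.countP_append, List.countP_append, List.zip_cons_cons, List.zip_cons_cons,
    List.countP_cons, List.countP_cons] at e1 e2
  simp only [decide_eq_true_eq, ne_eq] at e1 e2
  rcases hc with rfl | rfl
  · simp only [hde, if_false, if_true, Ne.symm hcd, not_true, not_false_iff] at e1 e2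
    split_ifs at e1 e2 <;> omega
  · simp only [hde, if_false, if_true, Ne.symm hcd, not_true, not_false_iff] at e1 e2
    split_ifs at e1 e2 <;> omega

/-- for distinct strings `u ≠ v` of length `k ≥ 2` over the alphabet
`{0,…,a−1}` (`a ≥ 2`) there are a mismatch position `j` (0-indexed) and a character
`α` equal to the mismatched character of one of the two strings (WLOG `u_j`), such
that a pair of two-run strings distinguishes `u` and `v` in Hamming distance: if
`α` is even (with `α + 1 < a`, i.e. `α ≠ a−1` when `a` is odd) the pair is
`{α^j (α+1)^(k−j), α^(j+1) (α+1)^(k−j−1)}`, and if `α` is odd the pair is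
`{(α−1)^j α^(k−j), (α−1)^(j+1) α^(k−j−1)}`. -/
theorem two_run_pair_resolves (a k : ℕ) (ha : 2 ≤ a) (hk : 2 ≤ k)
    (u v : List ℕ) (hu : u.length = k) (hv : v.length = k)
    (hua : ∀ c ∈ u, c < a) (hva : ∀ c ∈ v, c < a) (huv : u ≠ v) :
    ∃ j < k, u.getD j 0 ≠ v.getD j 0 ∧
      ∃ α : ℕ, (α = u.getD j 0 ∨ α = v.getD j 0) ∧
      ((α % 2 = 0 ∧ α + 1 < a ∧
        (∃ r ∈ ({List.replicate j α ++ List.replicate (k - j) (α + 1),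
                  List.replicate (j + 1) α ++
                    List.replicate (k - j - 1) (α + 1)} : Set (List ℕ)),
          hammingDistL u r ≠ hammingDistL v r)) ∨
      (α % 2 = 1 ∧
        (∃ r ∈ ({List.replicate j (α - 1) ++ List.replicate (k - j) α,
                  List.replicate (j + 1) (α - 1) ++
                    List.replicate (k - j - 1) α} : Set (List ℕ)),
          hammingDistL u r ≠ hammingDistL v r))) := by
 -- find a mismatch position
  have hlen : u.length = v.length := hu.trans hv.symm
  have hex : ∃ j, ∃ _ : j < k, u.getD j 0 ≠ v.getD j 0 := by
    by_contra h
    push_neg at h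
    apply huv
    apply List.ext_getElem hlen
    intro i h1 h2
    have := h i (by omega)
    rwa [List.getD_eq_getElem u 0 h1, List.getD_eq_getElem v 0 h2] at this
  obtain ⟨j, hj, hne⟩ := hex
  set c := u.getD j 0 with hc
  set d := v.getD j 0 with hd
  have hju : j < u.length := by omega
  have hjv : j < v.length := by omega
  have hud : u = u.take j ++ c :: u.drop (j+1) := by
    conv_lhs => rw [← List.take_append_drop j u]
    rw [List.drop_eq_getElem_cons hju]
    rw [hc, List.getD_eq_getElem u 0 hju]
  have hvd : v = v.take j ++ d :: v.drop (j+1) := by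
    conv_lhs => rw [← List.take_append_drop j v]
    rw [List.drop_eq_getElem_cons hjv]
    rw [hd, List.getD_eq_getElem v 0 hjv]
  have h1 : (u.take j).length = j := by simp; omega
  have h2 : (v.take j).length = j := by simp; omega
  set m := k - j - 1 with hm
  have hkj : k - j = m + 1 := by omega
  have hca : c < a := hua c (by rw [hud]; simp)
  have hda : d < a := hva d (by rw [hvd]; simp)
  refine ⟨j, hj, hne, ?_⟩
  have rw2 : ∀ α β : ℕ, List.replicate (j+1) α ++ List.replicate m β
      = List.replicate j α ++ α :: List.replicate m β := by
    intro α β; rw [List.replicate_succ', List.append_assoc]; rfl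
  have rw1 : ∀ α β : ℕ, List.replicate j α ++ List.replicate (k-j) β
      = List.replicate j α ++ β :: List.replicate m β := by
    intro α β; rw [hkj, List.replicate_succ]
  by_cases hcodd : c % 2 = 1
  · refine ⟨c, Or.inl rfl, Or.inr ⟨hcodd, ?_⟩⟩
    have hK := two_run_key j m u v _ _ _ _ c d (c-1) c hud hvd h1 h2 (Or.inr rfl)
      (Ne.symm hne) (by omega)
    rcases hK with hK | hK
    · exact ⟨_, Set.mem_insert _ _, by rw [rw1]; exact hK⟩
    · exact ⟨_, Set.mem_insert_of_mem _ rfl, by rw [rw2]; exact hK⟩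
  · by_cases hdodd : d % 2 = 1
    · refine ⟨d, Or.inr rfl, Or.inr ⟨hdodd, ?_⟩⟩
      have hK := two_run_key j m v u _ _ _ _ d c (d-1) d hvd hud h2 h1 (Or.inr rfl)
        hne (by omega)
      rcases hK with hK | hK
      · exact ⟨_, Set.mem_insert _ _, by rw [rw1]; exact (Ne.symm hK)⟩
      · exact ⟨_, Set.mem_insert_of_mem _ rfl, by rw [rw2]; exact (Ne.symm hK)⟩
    · by_cases hclt : c + 1 < a
      · refine ⟨c, Or.inl rfl, Or.inl ⟨by omega, hclt, ?_⟩⟩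
        have hK := two_run_key j m u v _ _ _ _ c d c (c+1) hud hvd h1 h2 (Or.inl rfl)
          (Ne.symm hne) (by omega)
        rcases hK with hK | hK
        · exact ⟨_, Set.mem_insert _ _, by rw [rw1]; exact hK⟩
        · exact ⟨_, Set.mem_insert_of_mem _ rfl, by rw [rw2]; exact hK⟩
      · have hdlt : d + 1 < a := by omega
        refine ⟨d, Or.inr rfl, Or.inl ⟨by omega, hdlt, ?_⟩⟩
        have hK := two_run_key j m v u _ _ _ _ d c d (d+1) hvd hud h2 h1 (Or.inl rfl)
          hne (by omega)
        rcases hK with hK | hK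
        · exact ⟨_, Set.mem_insert _ _, by rw [rw1]; exact (Ne.symm hK)⟩
        · exact ⟨_, Set.mem_insert_of_mem _ rfl, by rw [rw2]; exact (Ne.symm hK)⟩
end

section
/- The set R_{k,a} = ⋃_{n=0}^{⌊a/2⌋−1} { (2n)^i (2n+1)^{k−i} : 0 ≤ i ≤ k } of two-run strings resolves all pairs of distinct strings of length k under the Hamming distance: for any distinct u, v of length k over {0,…,a−1} there exists r ∈ R_{k,a} with h(u,r) ≠ h(v,r). -/
lemma zipRep (x : ℕ) (l : List ℕ) :
    ((l.zip (List.replicate l.length x)).countP (fun p => p.1 ≠ p.2))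
      = l.countP (fun c => c ≠ x) := by
  induction l with
  | nil => simp
  | cons c t ih =>
    simp only [List.length_cons, List.replicate_succ, List.zip_cons_cons,
      List.countP_cons, ih]

lemma zipRep' (l : List ℕ) (n x : ℕ) (h : l.length = n) :
    ((l.zip (List.replicate n x)).countP (fun p => p.1 ≠ p.2))
      = l.countP (fun c => c ≠ x) := by
  subst h; exact zipRep x l

lemma hd_formula (u : List ℕ) (k i x y : ℕ) (hu : u.length = k) (hi : i ≤ k) :
    hammingDistL u (List.replicate i x ++ List.replicate (k - i) y)
      = (u.take i).countP (fun c => c ≠ x) + (u.drop i).countP (fun c => c ≠ y) := by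
  unfold hammingDistL
  conv_lhs => rw [← List.take_append_drop i u]
  have h1 : (u.take i).length = i := by simp [hu, hi]
  have h2 : (u.drop i).length = k - i := by simp [hu]
  rw [List.zip_append (by simp [h1]), List.countP_append,
    zipRep' _ _ _ h1, zipRep' _ _ _ h2]

lemma step (u : List ℕ) (k i x y : ℕ) (hu : u.length = k) (hi : i < k) :
    hammingDistL u (List.replicate (i+1) x ++ List.replicate (k - (i+1)) y)
      + (if u[i]'(by omega) ≠ y then 1 else 0)
    = hammingDistL u (List.replicate i x ++ List.replicate (k - i) y)
      + (if u[i]'(by omega) ≠ x then 1 else 0) := by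
  rw [hd_formula u k (i+1) x y hu (by omega), hd_formula u k i x y hu (by omega)]
  have hik : i < u.length := by omega
  have ht : u.take (i+1) = u.take i ++ [u[i]'hik] := by
    rw [List.take_succ]
    simp [List.getElem?_eq_getElem hik]
  have hdr : u.drop i = u[i]'hik :: u.drop (i+1) := List.drop_eq_getElem_cons hik
  have single : ∀ (b z : ℕ), List.countP (fun c => c ≠ z) [b] = if b ≠ z then 1 else 0 := by
    intro b z
    by_cases h : b = z <;> simp [h]
  have cons : ∀ (b z : ℕ) (l : List ℕ),
      List.countP (fun c => c ≠ z) (b :: l)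
        = List.countP (fun c => c ≠ z) l + (if b ≠ z then 1 else 0) := by
    intro b z l
    by_cases h : b = z <;> simp [List.countP_cons, h]
  rw [ht, hdr, List.countP_append, single, cons]
  split_ifs <;> omega

lemma pointwise (a c d : ℕ) (hc : c < a) (hd : d < a)
    (key : ∀ n < a / 2,
      (if c ≠ 2*n then 1 else 0) + (if d ≠ 2*n+1 then 1 else 0)
        = (if c ≠ 2*n+1 then 1 else 0) + (if d ≠ 2*n then 1 else 0)) :
    c = d := by
  by_cases h1 : c < 2 * (a / 2)
  · have h := key (c / 2) (by omega)
    split_ifs at h <;> omega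
  · by_cases h2 : d < 2 * (a / 2)
    · have h := key (d / 2) (by omega)
      split_ifs at h <;> omega
    · omega

/-- the set `R_{k,a} = ⋃_{n=0}^{⌊a/2⌋−1} {(2n)^i (2n+1)^{k−i} : 0 ≤ i ≤ k}`
resolves all pairs of distinct strings of length `k` over `{0,…,a−1}` (`a ≥ 2`)
under the Hamming distance. -/
theorem two_run_set_resolves (a k : ℕ) (ha : 2 ≤ a)
    (u v : List ℕ) (hu : u.length = k) (hv : v.length = k)
    (hua : ∀ c ∈ u, c < a) (hva : ∀ c ∈ v, c < a) (huv : u ≠ v) :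
    ∃ n < a / 2, ∃ i ≤ k,
      hammingDistL u (List.replicate i (2 * n) ++ List.replicate (k - i) (2 * n + 1)) ≠
      hammingDistL v (List.replicate i (2 * n) ++ List.replicate (k - i) (2 * n + 1)) := by
  by_contra hcon
  push_neg at hcon
  apply huv
  apply List.ext_getElem (by omega)
  intro i hiu hiv
  have hik : i < k := by omega
  have key : ∀ n < a / 2,
      (if u[i]'hiu ≠ 2*n then 1 else 0) + (if v[i]'hiv ≠ 2*n+1 then 1 else 0)
        = (if u[i]'hiu ≠ 2*n+1 then 1 else 0) + (if v[i]'hiv ≠ 2*n then 1 else 0) := by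
    intro n hn
    have e1 := step u k i (2*n) (2*n+1) hu hik
    have e2 := step v k i (2*n) (2*n+1) hv hik
    have d1 := hcon n hn i (by omega)
    have d2 := hcon n hn (i+1) (by omega)
    split_ifs at e1 e2 ⊢ <;> omega
  exact pointwise a (u[i]'hiu) (v[i]'hiv) (hua _ (List.getElem_mem hiu))
    (hva _ (List.getElem_mem hiv)) key
end
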